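/- arXiv:2205.06916 — 2 statements merged into one kernel-verified Lean document; each statement's English description precedes it below -/
import Mathlib

section
/- For any two maximum spanning trees S and T of a connected weighted graph G and any edge s in E(S) \ E(T), there exists an edge t in E(T) \ E(S) such that both S - s + t and T - t + s are maximum spanning trees of G. -/
open SimpleGraph

section Helpers

variable {V : Type*}

private lemma isAcyclic_of_le {H H' : SimpleGraph V} (hle : H ≤ H') (h : H'.IsAcyclic) :
    H.IsAcyclic := fun _u c hc => h (c.mapLe hle) (hc.mapLe hle)

/-- Adding an edge between two vertices that are not reachable from each other preserves
acyclicity. -/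
private lemma acyclic_sup_edge {H : SimpleGraph V} (hH : H.IsAcyclic) {x y : V}
    (hnr : ¬ H.Reachable x y) : (H ⊔ edge x y).IsAcyclic := by
  have hxy : x ≠ y := by rintro rfl; exact hnr (Reachable.refl _)
  intro u c hc
  by_cases he : s(x, y) ∈ c.edges
  · have hadj : (H ⊔ edge x y).Adj x y := by
      rw [sup_adj, edge_adj]; exact Or.inr ⟨Or.inl ⟨rfl, rfl⟩, hxy⟩
    have hreach : ((H ⊔ edge x y) \ fromEdgeSet {s(x, y)}).Reachable x y :=
      ((adj_and_reachable_delete_edges_iff_exists_cycle).2 ⟨u, c, hc, he⟩).2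
    apply hnr
    refine hreach.mono ?_
    intro a b hab
    rw [sdiff_adj, sup_adj, edge_adj, fromEdgeSet_adj] at hab
    obtain ⟨h1 | ⟨h2, hne⟩, hnab⟩ := hab
    · exact h1
    · exfalso
      apply hnab
      refine ⟨?_, hne⟩
      rcases h2 with ⟨rfl, rfl⟩ | ⟨rfl, rfl⟩
      · rfl
      · exact Sym2.eq_swap
  · have hsub : ∀ e ∈ c.edges, e ∈ H.edgeSet := by
      intro e hec
      have h' := c.edges_subset_edgeSet hec
      rw [edgeSet_sup] at h'
      rcases h' with h' | h'
      · exact h'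
      · rw [edge_edgeSet_of_ne hxy, Set.mem_singleton_iff] at h'
        exact absurd (h' ▸ hec) he
    exact hH (c.transfer H hsub) (hc.transfer hsub)

/-- Adding an edge `x y` to a graph in which every vertex is reachable from `x` or `y`
gives a connected graph. -/
private lemma connected_sup_edge {H : SimpleGraph V} {x y : V} (hxy : x ≠ y)
    (hcov : ∀ v, H.Reachable x v ∨ H.Reachable y v) : (H ⊔ edge x y).Connected := by
  have hadj : (H ⊔ edge x y).Adj x y := by
    rw [sup_adj, edge_adj]; exact Or.inr ⟨Or.inl ⟨rfl, rfl⟩, hxy⟩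
  have key : ∀ v, (H ⊔ edge x y).Reachable x v := by
    intro v
    rcases hcov v with h | h
    · exact h.mono le_sup_left
    · exact hadj.reachable.trans (h.mono le_sup_left)
  haveI : Nonempty V := ⟨x⟩
  exact Connected.mk fun u v => (key u).symm.trans (key v)

/-- In a graph, every vertex reachable from `u` via a walk is, after deleting the edge
`s(c, d)`, still reachable from `c` or from `d`, provided `u` is. -/
private lemma reachable_delete_cases {R : SimpleGraph V} {c d : V} :
    ∀ {u v : V} (_p : R.Walk u v),
      ((R \ fromEdgeSet {s(c, d)}).Reachable c u ∨ (R \ fromEdgeSet {s(c, d)}).Reachable d u) →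
      ((R \ fromEdgeSet {s(c, d)}).Reachable c v ∨ (R \ fromEdgeSet {s(c, d)}).Reachable d v) := by
  intro u v p
  induction p with
  | nil => exact id
  | @cons u u' v h q ih =>
    intro hu
    apply ih
    by_cases he : s(u, u') = s(c, d)
    · rw [Sym2.eq_iff] at he
      rcases he with ⟨rfl, rfl⟩ | ⟨rfl, rfl⟩
      · exact Or.inr (Reachable.refl _)
      · exact Or.inl (Reachable.refl _)
    · have hadj : (R \ fromEdgeSet {s(c, d)}).Adj u u' := by
        rw [sdiff_adj, fromEdgeSet_adj]
        exact ⟨h, fun hc => he hc.1⟩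
      rcases hu with h' | h'
      · exact Or.inl (h'.trans hadj.reachable)
      · exact Or.inr (h'.trans hadj.reachable)

/-- Given a path from a vertex of `A` to a vertex outside `A`, there is an edge `s(x, y)` of
the path with `x ∈ A`, `y ∉ A` such that, after deleting that edge, the start is still
reachable from `x`, and `y` still reaches the end. -/
private lemma exists_crossing {T : SimpleGraph V} (A : Set V) :
    ∀ {u b : V} (p : T.Walk u b), p.IsPath → u ∈ A → b ∉ A →
      ∃ x y, T.Adj x y ∧ x ∈ A ∧ y ∉ A ∧
        (T \ fromEdgeSet {s(x, y)}).Reachable u x ∧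
        (T \ fromEdgeSet {s(x, y)}).Reachable y b := by
  intro u b p
  induction p with
  | nil => exact fun _ hu hb => absurd hu hb
  | @cons u u' b h q ih =>
    intro hp hu hb
    rw [Walk.cons_isPath_iff] at hp
    by_cases hu' : u' ∈ A
    · obtain ⟨x, y, hxy, hxA, hyA, hux, hyb⟩ := ih hp.1 hu' hb
      refine ⟨x, y, hxy, hxA, hyA, ?_, hyb⟩
      have hne : s(u, u') ≠ s(x, y) := by
        intro hE
        rw [Sym2.eq_iff] at hE
        rcases hE with ⟨rfl, rfl⟩ | ⟨rfl, rfl⟩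
        · exact hyA hu'
        · exact hyA hu
      have hadj : (T \ fromEdgeSet {s(x, y)}).Adj u u' := by
        rw [sdiff_adj, fromEdgeSet_adj]
        exact ⟨h, fun hc => hne hc.1⟩
      exact hadj.reachable.trans hux
    · refine ⟨u, u', h, hu, hu', Reachable.refl _, ?_⟩
      have hnotmem : s(u, u') ∉ q.edges := fun hmem =>
        hp.2 (Walk.fst_mem_support_of_mem_edges q hmem)
      have hq' : ∀ e, e ∈ q.edges → e ∉ ({s(u, u')} : Set (Sym2 V)) := by
        intro e he hc
        rw [Set.mem_singleton_iff] at hc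
        exact hnotmem (hc ▸ he)
      exact ⟨q.toDeleteEdges {s(u, u')} hq'⟩


private lemma fromEdgeSet_exchange {V : Type*} [DecidableEq V] (E : Finset (Sym2 V))
    (c d x y : V) :
    SimpleGraph.fromEdgeSet ((insert s(x, y) (E.erase s(c, d)) : Finset (Sym2 V)) : Set (Sym2 V)) =
      (SimpleGraph.fromEdgeSet (E : Set (Sym2 V)) \ SimpleGraph.fromEdgeSet {s(c, d)}) ⊔ edge x y := by
  ext u v
  simp only [fromEdgeSet_adj, Finset.coe_insert, Set.mem_insert_iff, Finset.coe_erase,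
    Set.mem_diff, Set.mem_singleton_iff, Finset.mem_coe, sup_adj, sdiff_adj, edge_adj]
  constructor
  · rintro ⟨h1 | ⟨h2, h3⟩, huv⟩
    · refine Or.inr ⟨?_, huv⟩
      rcases Sym2.eq_iff.1 h1 with ⟨rfl, rfl⟩ | ⟨rfl, rfl⟩
      · exact Or.inl ⟨rfl, rfl⟩
      · exact Or.inr ⟨rfl, rfl⟩
    · exact Or.inl ⟨⟨h2, huv⟩, fun hc => h3 hc.1⟩
  · rintro (⟨⟨h2, huv⟩, h3⟩ | ⟨hcase, huv⟩)
    · exact ⟨Or.inr ⟨h2, fun hc => h3 ⟨hc, huv⟩⟩, huv⟩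
    · refine ⟨Or.inl ?_, huv⟩
      rcases hcase with ⟨rfl, rfl⟩ | ⟨rfl, rfl⟩
      · rfl
      · exact Sym2.eq_swap

end Helpers

/-- `E'` is (the edge set of) a spanning tree of `G`. -/
def IsSpanningTree {V : Type*} (G : SimpleGraph V) (E' : Finset (Sym2 V)) : Prop :=
  (E' : Set (Sym2 V)) ⊆ G.edgeSet ∧ (SimpleGraph.fromEdgeSet (E' : Set (Sym2 V))).IsTree

/-- `E'` is a maximum spanning tree of `G` with respect to the weights `w`. -/
def IsMaxSpanningTree {V : Type*} (G : SimpleGraph V) (w : Sym2 V → ℝ)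
    (E' : Finset (Sym2 V)) : Prop :=
  IsSpanningTree G E' ∧
    ∀ E'' : Finset (Sym2 V), IsSpanningTree G E'' → ∑ e ∈ E'', w e ≤ ∑ e ∈ E', w e

/-- For maximum spanning trees `S`, `T` of a connected weighted graph
and any edge `s ∈ E(S) \ E(T)`, there is an edge `t ∈ E(T) \ E(S)` such that both
`S - s + t` and `T - t + s` are maximum spanning trees. -/
theorem maxSpanningTree_exchange {V : Type*} [DecidableEq V]
    (G : SimpleGraph V) (hG : G.Connected) (w : Sym2 V → ℝ)
    (ES ET : Finset (Sym2 V))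
    (hS : IsMaxSpanningTree G w ES) (hT : IsMaxSpanningTree G w ET)
    (s : Sym2 V) (hs : s ∈ ES \ ET) :
    ∃ t ∈ ET \ ES,
      IsMaxSpanningTree G w (insert t (ES.erase s)) ∧
      IsMaxSpanningTree G w (insert s (ET.erase t)) := by
  classical
  obtain ⟨⟨hSsub, hStree⟩, hSmax⟩ := hS
  obtain ⟨⟨hTsub, hTtree⟩, hTmax⟩ := hT
  obtain ⟨hsS, hsT⟩ := Finset.mem_sdiff.1 hs
  clear hs
  revert hsS hsT
  induction s using Sym2.ind with
  | _ a b =>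
  intro hsS hsT
  have hab : G.Adj a b := G.mem_edgeSet.1 (hSsub (Finset.mem_coe.2 hsS))
  have hne : a ≠ b := hab.ne
  set GS := SimpleGraph.fromEdgeSet (ES : Set (Sym2 V)) with hGSdef
  set GT := SimpleGraph.fromEdgeSet (ET : Set (Sym2 V)) with hGTdef
  have hSadj : GS.Adj a b := (fromEdgeSet_adj _).2 ⟨Finset.mem_coe.2 hsS, hne⟩
  set S' := GS \ SimpleGraph.fromEdgeSet {s(a, b)} with hS'def
  have hbridgeS : ¬ S'.Reachable a b :=
    (isBridge_iff.1 (isAcyclic_iff_forall_edge_isBridge.1 hStree.IsAcyclic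
      (GS.mem_edgeSet.2 hSadj)))
  have hcoverS : ∀ v, S'.Reachable a v ∨ S'.Reachable b v := fun v =>
    reachable_delete_cases (hStree.isConnected.preconnected a v).some
      (Or.inl (Reachable.refl _))
  -- find the crossing edge on a path in T from a to b
  obtain ⟨pT, hpT⟩ := ((hTtree.isConnected.preconnected a b).some.toPath :
    GT.Path a b)
  obtain ⟨x, y, hxyT, hxA, hyA, hax, hyb⟩ :=
    exists_crossing {v | S'.Reachable a v} pT hpT (Reachable.refl a) hbridgeS
  set T' := GT \ SimpleGraph.fromEdgeSet {s(x, y)} with hT'def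
  have hxyne : x ≠ y := hxyT.ne
  have htET : s(x, y) ∈ ET := Finset.mem_coe.1 ((fromEdgeSet_adj _).1 hxyT).1
  have htne : s(x, y) ≠ s(a, b) := fun h => hsT (h ▸ htET)
  have htES : s(x, y) ∉ ES := by
    intro hmem
    apply hyA
    have hadj : S'.Adj x y := by
      rw [hS'def, sdiff_adj, hGSdef, fromEdgeSet_adj, fromEdgeSet_adj]
      exact ⟨⟨Finset.mem_coe.2 hmem, hxyne⟩, fun hc => htne hc.1⟩
    exact hxA.trans hadj.reachable
  have hnrS'xy : ¬ S'.Reachable x y := fun h => hyA (hxA.trans h)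
  have hS'by : S'.Reachable b y := (hcoverS y).resolve_left hyA
  -- the new S-tree
  have hGS1 : SimpleGraph.fromEdgeSet ((insert s(x, y) (ES.erase s(a, b)) : Finset (Sym2 V)) :
      Set (Sym2 V)) = S' ⊔ edge x y := fromEdgeSet_exchange ES a b x y
  have htree1 : (S' ⊔ edge x y).IsTree := by
    constructor
    · exact connected_sup_edge hxyne fun v =>
        (hcoverS v).imp (fun h => hxA.symm.trans h) (fun h => hS'by.symm.trans h)
    · exact acyclic_sup_edge (isAcyclic_of_le sdiff_le hStree.IsAcyclic) hnrS'xy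
  have hst1 : IsSpanningTree G (insert s(x, y) (ES.erase s(a, b))) := by
    refine ⟨?_, by rw [hGS1]; exact htree1⟩
    intro e he
    simp only [Finset.coe_insert, Set.mem_insert_iff, Finset.mem_coe] at he
    rcases he with rfl | he
    · exact hTsub (Finset.mem_coe.2 htET)
    · exact hSsub (Finset.mem_coe.2 (Finset.mem_of_mem_erase he))
  -- the new T-tree
  have hbridgeT : ¬ T'.Reachable x y :=
    (isBridge_iff.1 (isAcyclic_iff_forall_edge_isBridge.1 hTtree.IsAcyclic
      (GT.mem_edgeSet.2 hxyT)))
  have hcoverT : ∀ v, T'.Reachable x v ∨ T'.Reachable y v := fun v =>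
    reachable_delete_cases (hTtree.isConnected.preconnected x v).some
      (Or.inl (Reachable.refl _))
  have hnrT'ab : ¬ T'.Reachable a b := fun h =>
    hbridgeT (hax.symm.trans (h.trans hyb.symm))
  have hGT1 : SimpleGraph.fromEdgeSet ((insert s(a, b) (ET.erase s(x, y)) : Finset (Sym2 V)) :
      Set (Sym2 V)) = T' ⊔ edge a b := fromEdgeSet_exchange ET x y a b
  have htree2 : (T' ⊔ edge a b).IsTree := by
    constructor
    · exact connected_sup_edge hne fun v =>
        (hcoverT v).imp (fun h => hax.trans h) (fun h => hyb.symm.trans h)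
    · exact acyclic_sup_edge (isAcyclic_of_le sdiff_le hTtree.IsAcyclic) hnrT'ab
  have hst2 : IsSpanningTree G (insert s(a, b) (ET.erase s(x, y))) := by
    refine ⟨?_, by rw [hGT1]; exact htree2⟩
    intro e he
    simp only [Finset.coe_insert, Set.mem_insert_iff, Finset.mem_coe] at he
    rcases he with rfl | he
    · exact hSsub (Finset.mem_coe.2 hsS)
    · exact hTsub (Finset.mem_coe.2 (Finset.mem_of_mem_erase he))
  -- weight bookkeeping
  have hsum1 : ∑ e ∈ insert s(x, y) (ES.erase s(a, b)), w e =
      w s(x, y) + (∑ e ∈ ES, w e - w s(a, b)) := by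
    rw [Finset.sum_insert (fun h => htES (Finset.mem_of_mem_erase h))]
    have h2 := Finset.add_sum_erase ES w hsS
    linarith
  have hsum2 : ∑ e ∈ insert s(a, b) (ET.erase s(x, y)), w e =
      w s(a, b) + (∑ e ∈ ET, w e - w s(x, y)) := by
    rw [Finset.sum_insert (fun h => hsT (Finset.mem_of_mem_erase h))]
    have h2 := Finset.add_sum_erase ET w htET
    linarith
  have hle1 := hSmax _ hst1
  have hle2 := hTmax _ hst2
  rw [hsum1] at hle1
  rw [hsum2] at hle2
  have hw : w s(x, y) = w s(a, b) := le_antisymm (by linarith) (by linarith)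
  refine ⟨s(x, y), Finset.mem_sdiff.2 ⟨htET, htES⟩, ⟨hst1, ?_⟩, ⟨hst2, ?_⟩⟩
  · intro E'' hE''
    have := hSmax E'' hE''
    rw [hsum1]
    linarith
  · intro E'' hE''
    have := hTmax E'' hE''
    rw [hsum2]
    linarith
end

section
/- Given a connected weighted graph G and two maximum spanning trees T and T', there exists a finite sequence of maximum spanning trees T_0 = T, T_1, ..., T_k = T' such that dist(T_{i-1}, T_i) = 1 for all i from 1 to k. -/
open SimpleGraph

section Aux

set_option linter.unusedSectionVars false

variable {V : Type*} [DecidableEq V]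

private lemma aux_fromEdgeSet_erase (s : Finset (Sym2 V)) (e : Sym2 V) :
    fromEdgeSet (s : Set (Sym2 V)) \ fromEdgeSet {e}
      = fromEdgeSet ((s.erase e : Finset (Sym2 V)) : Set (Sym2 V)) := by
  ext v u
  simp only [sdiff_adj, fromEdgeSet_adj, Set.mem_singleton_iff, Finset.coe_erase,
    Set.mem_diff, Finset.mem_coe, Set.mem_singleton_iff]
  tauto

private lemma aux_acyclic_mono {G H : SimpleGraph V} (h : G ≤ H) (hH : H.IsAcyclic) :
    G.IsAcyclic := fun _ c hc => hH (c.mapLe h) (hc.mapLe h)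

private lemma aux_adj_erase {t : Finset (Sym2 V)} {e : Sym2 V} {a b : V}
    (h : (fromEdgeSet (t : Set (Sym2 V))).Adj a b) (hne : s(a, b) ≠ e) :
    (fromEdgeSet ((t.erase e : Finset (Sym2 V)) : Set (Sym2 V))).Adj a b := by
  rw [fromEdgeSet_adj] at h ⊢
  exact ⟨Finset.mem_coe.2 (Finset.mem_erase.2 ⟨hne, Finset.mem_coe.1 h.1⟩), h.2⟩

private lemma aux_reach3 {t : Finset (Sym2 V)} {x y : V} {v u : V}
    (p : (fromEdgeSet (t : Set (Sym2 V))).Walk v u) :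
    (fromEdgeSet ((t.erase s(x, y) : Finset (Sym2 V)) : Set (Sym2 V))).Reachable v u ∨
    ((fromEdgeSet ((t.erase s(x, y) : Finset (Sym2 V)) : Set (Sym2 V))).Reachable v x ∧
      (fromEdgeSet ((t.erase s(x, y) : Finset (Sym2 V)) : Set (Sym2 V))).Reachable y u) ∨
    ((fromEdgeSet ((t.erase s(x, y) : Finset (Sym2 V)) : Set (Sym2 V))).Reachable v y ∧
      (fromEdgeSet ((t.erase s(x, y) : Finset (Sym2 V)) : Set (Sym2 V))).Reachable x u) := by
  induction p with
  | nil => exact Or.inl (Reachable.refl _)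
  | @cons a b c h q ih =>
    by_cases hve : s(a, b) = s(x, y)
    · rw [Sym2.eq_iff] at hve
      rcases hve with ⟨rfl, rfl⟩ | ⟨rfl, rfl⟩
      · -- a = x, b = y
        rcases ih with h1 | ⟨h1, h2⟩ | ⟨h1, h2⟩
        · exact Or.inr (Or.inl ⟨Reachable.refl _, h1⟩)
        · exact Or.inr (Or.inl ⟨Reachable.refl _, h2⟩)
        · exact Or.inl h2
      · -- a = y, b = x
        rcases ih with h1 | ⟨h1, h2⟩ | ⟨h1, h2⟩
        · exact Or.inr (Or.inr ⟨Reachable.refl _, h1⟩)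
        · exact Or.inl h2
        · exact Or.inr (Or.inr ⟨Reachable.refl _, h2⟩)
    · have h' := aux_adj_erase h hve
      rcases ih with h1 | ⟨h1, h2⟩ | ⟨h1, h2⟩
      · exact Or.inl (h'.reachable.trans h1)
      · exact Or.inr (Or.inl ⟨h'.reachable.trans h1, h2⟩)
      · exact Or.inr (Or.inr ⟨h'.reachable.trans h1, h2⟩)

private lemma aux_reach_endpoints {t : Finset (Sym2 V)} {x y v : V}
    (p : (fromEdgeSet (t : Set (Sym2 V))).Walk v x) :
    (fromEdgeSet ((t.erase s(x, y) : Finset (Sym2 V)) : Set (Sym2 V))).Reachable v x ∨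
    (fromEdgeSet ((t.erase s(x, y) : Finset (Sym2 V)) : Set (Sym2 V))).Reachable v y := by
  rcases aux_reach3 (x := x) (y := y) p with h1 | ⟨h1, -⟩ | ⟨h1, -⟩
  · exact Or.inl h1
  · exact Or.inl h1
  · exact Or.inr h1

private lemma aux_crossing {W : SimpleGraph V} {P : V → Prop} {c d : V}
    (p : W.Walk c d) (hc : P c) (hd : ¬ P d) :
    ∃ a b, W.Adj a b ∧ P a ∧ ¬ P b ∧ s(a, b) ∈ p.edges := by
  induction p with
  | nil => exact absurd hc hd
  | @cons a b _ h q ih =>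
    by_cases hb : P b
    · obtain ⟨a', b', h1, h2, h3, h4⟩ := ih hb hd
      exact ⟨a', b', h1, h2, h3, by simp [h4]⟩
    · exact ⟨a, b, h, hc, hb, by simp⟩

/-- Adding an edge between two non-reachable vertices of an acyclic graph keeps it acyclic. -/
private lemma aux_acyclic_insert {t : Finset (Sym2 V)} {a b : V} (hab : a ≠ b)
    (ht : (fromEdgeSet (t : Set (Sym2 V))).IsAcyclic)
    (hr : ¬ (fromEdgeSet (t : Set (Sym2 V))).Reachable a b) :
    (fromEdgeSet ((insert s(a, b) t : Finset (Sym2 V)) : Set (Sym2 V))).IsAcyclic := by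
  have hnot : s(a, b) ∉ t := by
    intro hmem
    exact hr (Adj.reachable ((fromEdgeSet_adj _).2 ⟨Finset.mem_coe.2 hmem, hab⟩))
  intro v c hc
  by_cases he : s(a, b) ∈ c.edges
  · -- the edge lies on a cycle, so it is not a bridge; removing it keeps `a b` reachable
    have hadj : (fromEdgeSet ((insert s(a, b) t : Finset (Sym2 V)) : Set (Sym2 V))).Adj a b :=
      (fromEdgeSet_adj _).2 ⟨by simp, hab⟩
    have hnb : ¬ (fromEdgeSet ((insert s(a, b) t : Finset (Sym2 V)) : Set (Sym2 V))).IsBridge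
        s(a, b) := fun hbr => (isBridge_iff_adj_and_forall_cycle_notMem hadj).mp hbr c hc he
    rw [isBridge_iff] at hnb
    push_neg at hnb
    have hreach := hnb
    rw [deleteEdges, aux_fromEdgeSet_erase, Finset.erase_insert hnot] at hreach
    exact hr hreach
  · -- the cycle avoids the new edge, so it transfers to the old acyclic graph
    have hsub : ∀ f ∈ c.edges, f ∈ (fromEdgeSet (t : Set (Sym2 V))).edgeSet := by
      intro f hf
      have h1 := c.edges_subset_edgeSet hf
      rw [edgeSet_fromEdgeSet] at h1 ⊢
      refine ⟨?_, h1.2⟩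
      have h2 := h1.1
      simp only [Finset.coe_insert, Set.mem_insert_iff, Finset.mem_coe] at h2
      rcases h2 with rfl | h2
      · exact absurd hf he
      · exact Finset.mem_coe.2 h2
    exact ht (c.transfer _ hsub) (hc.transfer hsub)

private lemma aux_finiteV {t : Finset (Sym2 V)}
    (h : (fromEdgeSet (t : Set (Sym2 V))).IsTree) : Finite V := by
  by_cases hs : Subsingleton V
  · exact Finite.of_subsingleton
  · rw [not_subsingleton_iff_nontrivial] at hs
    have hmem : ∀ v : V, ∃ e ∈ t, v ∈ e := by
      intro v
      obtain ⟨u, hu⟩ := exists_ne v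
      obtain ⟨p⟩ := h.isConnected v u
      cases p with
      | nil => exact absurd rfl hu
      | cons hadj q =>
        rw [fromEdgeSet_adj] at hadj
        exact ⟨_, Finset.mem_coe.1 hadj.1, Sym2.mem_mk_left _ _⟩
    have hfin : (⋃ e ∈ (t : Set (Sym2 V)), {v : V | v ∈ e}).Finite := by
      refine Set.Finite.biUnion t.finite_toSet fun e _ => ?_
      induction e using Sym2.ind with
      | _ a b =>
        have : {v : V | v ∈ s(a, b)} = {a, b} := by ext z; simp [Sym2.mem_iff]
        rw [this]
        exact (Set.finite_singleton b).insert a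
    rw [← Set.finite_univ_iff]
    refine hfin.subset fun v _ => ?_
    obtain ⟨e, he, hve⟩ := hmem v
    exact Set.mem_biUnion (Finset.mem_coe.2 he) hve

private lemma aux_st_eq {G : SimpleGraph V} {ET ET' : Finset (Sym2 V)}
    (h : IsSpanningTree G ET) (h' : IsSpanningTree G ET') (hsub : ET ⊆ ET') : ET = ET' := by
  classical
  have : Finite V := aux_finiteV h.2
  have : Fintype V := Fintype.ofFinite V
  have key : ∀ t : Finset (Sym2 V), IsSpanningTree G t →
      ∀ inst : Fintype (fromEdgeSet (t : Set (Sym2 V))).edgeSet,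
      (@edgeFinset V (fromEdgeSet (t : Set (Sym2 V))) inst) = t := by
    intro t ht inst
    ext f
    rw [mem_edgeFinset, edgeSet_fromEdgeSet]
    constructor
    · rintro ⟨hf, -⟩; exact Finset.mem_coe.1 hf
    · intro hf
      exact ⟨Finset.mem_coe.2 hf, G.not_isDiag_of_mem_edgeSet (ht.1 (Finset.mem_coe.2 hf))⟩
  have c1 := h.2.card_edgeFinset
  have c2 := h'.2.card_edgeFinset
  rw [key ET h _] at c1
  rw [key ET' h' _] at c2
  exact Finset.eq_of_subset_of_card_le hsub (by omega)

/-- The key exchange step. -/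
private lemma aux_exchange {G : SimpleGraph V} {w : Sym2 V → ℝ} {ET ET' : Finset (Sym2 V)}
    (hT : IsMaxSpanningTree G w ET) (hT' : IsMaxSpanningTree G w ET')
    (hne : (ET \ ET').Nonempty) :
    ∃ ET2, IsMaxSpanningTree G w ET2 ∧ (ET \ ET2).card = 1 ∧
      (ET2 \ ET').card < (ET \ ET').card := by
  classical
  obtain ⟨e, he⟩ := hne
  have heT : e ∈ ET := (Finset.mem_sdiff.1 he).1
  have heT' : e ∉ ET' := (Finset.mem_sdiff.1 he).2
  have heG : e ∈ G.edgeSet := hT.1.1 (Finset.mem_coe.2 heT)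
  induction e using Sym2.ind with
  | _ x y =>
  have hxy : x ≠ y := by
    intro hEq; exact G.not_isDiag_of_mem_edgeSet heG (by simp [hEq])
  have hHt : (fromEdgeSet (ET : Set (Sym2 V))).IsTree := hT.1.2
  have hH't : (fromEdgeSet (ET' : Set (Sym2 V))).IsTree := hT'.1.2
  -- x and y are not reachable after erasing s(x,y) from ET
  have hRxy : ¬ (fromEdgeSet ((ET.erase s(x, y) : Finset (Sym2 V)) : Set (Sym2 V))).Reachable
      x y := by
    have hadj : (fromEdgeSet (ET : Set (Sym2 V))).Adj x y :=
      (fromEdgeSet_adj _).2 ⟨Finset.mem_coe.2 heT, hxy⟩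
    have hbr := isAcyclic_iff_forall_adj_isBridge.mp hHt.IsAcyclic hadj
    rw [isBridge_iff] at hbr
    rw [← aux_fromEdgeSet_erase]
    exact hbr
  -- the unique path from x to y in the tree ET'
  obtain ⟨p, hp, hup⟩ := hH't.existsUnique_path x y
  -- find the crossing edge s(a,b) on p
  obtain ⟨a, b, hadj', hPa, hPb, hmem⟩ :=
    aux_crossing (P := fun v =>
      (fromEdgeSet ((ET.erase s(x, y) : Finset (Sym2 V)) : Set (Sym2 V))).Reachable x v)
      p (Reachable.refl x) hRxy
  have hab : a ≠ b := hadj'.ne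
  have he'T' : s(a, b) ∈ ET' := Finset.mem_coe.1 ((fromEdgeSet_adj _).1 hadj').1
  have hee' : s(x, y) ≠ s(a, b) := fun hEq => heT' (hEq ▸ he'T')
  have he'T : s(a, b) ∉ ET := by
    intro hmem'
    have : (fromEdgeSet ((ET.erase s(x, y) : Finset (Sym2 V)) : Set (Sym2 V))).Adj a b :=
      aux_adj_erase ((fromEdgeSet_adj _).2 ⟨Finset.mem_coe.2 hmem', hab⟩) (Ne.symm hee')
    exact hPb (hPa.trans this.reachable)
  have hRab : ¬ (fromEdgeSet ((ET.erase s(x, y) : Finset (Sym2 V)) : Set (Sym2 V))).Reachable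
      a b := fun h => hPb (hPa.trans h)
  have hmonoE' : fromEdgeSet ((ET'.erase s(a, b) : Finset (Sym2 V)) : Set (Sym2 V))
      ≤ fromEdgeSet (ET' : Set (Sym2 V)) :=
    fromEdgeSet_mono (by exact_mod_cast Finset.coe_subset.2 (Finset.erase_subset _ _))
  -- x and y are not reachable after erasing s(a,b) from ET'
  have hR'xy : ¬ (fromEdgeSet ((ET'.erase s(a, b) : Finset (Sym2 V)) : Set (Sym2 V))).Reachable
      x y := by
    rintro ⟨q⟩
    have hqp : ((q.mapLe hmonoE').toPath :
        (fromEdgeSet (ET' : Set (Sym2 V))).Walk x y) = p := hup _ (q.mapLe hmonoE').toPath.2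
    have h5 : s(a, b) ∈ (q.mapLe hmonoE').edges :=
      Walk.edges_toPath_subset _ (hqp ▸ hmem)
    have h6 : s(a, b) ∈ q.edges := by
      simpa [Walk.edges_mapLe_eq_edges]
        using h5
    have h7 := q.edges_subset_edgeSet h6
    rw [edgeSet_fromEdgeSet] at h7
    have := h7.1
    simp at this
  -- the two exchanged trees
  set ET2 : Finset (Sym2 V) := insert s(a, b) (ET.erase s(x, y)) with hET2
  set ET2' : Finset (Sym2 V) := insert s(x, y) (ET'.erase s(a, b)) with hET2'
  have hmono2 : fromEdgeSet ((ET.erase s(x, y) : Finset (Sym2 V)) : Set (Sym2 V))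
      ≤ fromEdgeSet (ET2 : Set (Sym2 V)) :=
    fromEdgeSet_mono (by exact_mod_cast Finset.coe_subset.2 (Finset.subset_insert _ _))
  have hmono2' : fromEdgeSet ((ET'.erase s(a, b) : Finset (Sym2 V)) : Set (Sym2 V))
      ≤ fromEdgeSet (ET2' : Set (Sym2 V)) :=
    fromEdgeSet_mono (by exact_mod_cast Finset.coe_subset.2 (Finset.subset_insert _ _))
  -- ET2 is a spanning tree
  have hK2adj : (fromEdgeSet (ET2 : Set (Sym2 V))).Adj a b :=
    (fromEdgeSet_adj _).2 ⟨by simp [hET2], hab⟩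
  have hst2 : IsSpanningTree G ET2 := by
    refine ⟨?_, ?_, ?_⟩
    · intro f hf
      simp only [hET2, Finset.coe_insert, Set.mem_insert_iff, Finset.mem_coe,
        Finset.mem_erase] at hf
      rcases hf with rfl | ⟨-, hf⟩
      · exact hT'.1.1 (Finset.mem_coe.2 he'T')
      · exact hT.1.1 (Finset.mem_coe.2 hf)
    · -- connected
      have hxb : (fromEdgeSet (ET2 : Set (Sym2 V))).Reachable x b :=
        (hPa.mono hmono2).trans hK2adj.reachable
      have hall : ∀ v : V, (fromEdgeSet (ET2 : Set (Sym2 V))).Reachable v x := by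
        intro v
        obtain ⟨q⟩ := hHt.isConnected v x
        rcases aux_reach_endpoints (y := y) q with h1 | h1
        · exact h1.mono hmono2
        · -- v reaches y; link y back to x through b
          obtain ⟨q'⟩ := hHt.isConnected b x
          rcases aux_reach_endpoints (y := y) q' with h2 | h2
          · exact absurd h2.symm hPb
          · exact (h1.mono hmono2).trans (((h2.mono hmono2).symm).trans hxb.symm)
      have : Nonempty V := hHt.isConnected.nonempty
      refine ⟨fun u v => (hall u).trans (hall v).symm⟩
    · exact aux_acyclic_insert hab
        (aux_acyclic_mono (fromEdgeSet_mono (by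
          exact_mod_cast Finset.coe_subset.2 (Finset.erase_subset _ _))) hHt.IsAcyclic) hRab
  -- ET2' is a spanning tree
  have hK2'adj : (fromEdgeSet (ET2' : Set (Sym2 V))).Adj x y :=
    (fromEdgeSet_adj _).2 ⟨by simp [hET2'], hxy⟩
  have hst2' : IsSpanningTree G ET2' := by
    refine ⟨?_, ?_, ?_⟩
    · intro f hf
      simp only [hET2', Finset.coe_insert, Set.mem_insert_iff, Finset.mem_coe,
        Finset.mem_erase] at hf
      rcases hf with rfl | ⟨-, hf⟩
      · exact heG
      · exact hT'.1.1 (Finset.mem_coe.2 hf)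
    · -- connected
      have hK'ab : (fromEdgeSet (ET2' : Set (Sym2 V))).Reachable a b := by
        obtain ⟨qx⟩ := hH't.isConnected x a
        obtain ⟨qy⟩ := hH't.isConnected y a
        rcases aux_reach_endpoints (y := b) qx with h1 | h1
        · rcases aux_reach_endpoints (y := b) qy with h2 | h2
          · exact absurd (h1.trans h2.symm) hR'xy
          · exact (h1.symm.mono hmono2').trans
              ((hK2'adj.reachable).trans (h2.mono hmono2'))
        · rcases aux_reach_endpoints (y := b) qy with h2 | h2
          · exact (h2.symm.mono hmono2').trans
              ((hK2'adj.reachable.symm).trans (h1.mono hmono2'))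
          · exact absurd (h1.trans h2.symm) hR'xy
      have hall : ∀ v : V, (fromEdgeSet (ET2' : Set (Sym2 V))).Reachable v a := by
        intro v
        obtain ⟨q⟩ := hH't.isConnected v a
        rcases aux_reach_endpoints (y := b) q with h1 | h1
        · exact h1.mono hmono2'
        · exact (h1.mono hmono2').trans hK'ab.symm
      have : Nonempty V := hH't.isConnected.nonempty
      refine ⟨fun u v => (hall u).trans (hall v).symm⟩
    · exact aux_acyclic_insert hxy
        (aux_acyclic_mono hmonoE' hH't.IsAcyclic) hR'xy
  -- weight comparison
  have hsum2 : ∑ f ∈ ET2, w f = ∑ f ∈ ET, w f - w s(x, y) + w s(a, b) := by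
    rw [hET2, Finset.sum_insert (fun h => he'T (Finset.mem_of_mem_erase h))]
    have := Finset.sum_erase_add ET w heT
    linarith
  have hsum2' : ∑ f ∈ ET2', w f = ∑ f ∈ ET', w f - w s(a, b) + w s(x, y) := by
    rw [hET2', Finset.sum_insert (fun h => heT' (Finset.mem_of_mem_erase h))]
    have := Finset.sum_erase_add ET' w he'T'
    linarith
  have hle1 := hT.2 ET2 hst2
  have hle2 := hT'.2 ET2' hst2'
  have hweq : w s(a, b) = w s(x, y) := by
    rw [hsum2] at hle1; rw [hsum2'] at hle2; linarith
  have hsumEq : ∑ f ∈ ET2, w f = ∑ f ∈ ET, w f := by rw [hsum2, hweq]; ring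
  refine ⟨ET2, ⟨hst2, fun E'' hE => (hT.2 E'' hE).trans (le_of_eq hsumEq.symm)⟩, ?_, ?_⟩
  · -- (ET \ ET2).card = 1
    have hEq : ET \ ET2 = {s(x, y)} := by
      ext f
      simp only [Finset.mem_sdiff, hET2, Finset.mem_insert, Finset.mem_erase,
        Finset.mem_singleton]
      constructor
      · rintro ⟨hf, hf2⟩
        push_neg at hf2
        rcases hf2 with ⟨h1, h2⟩
        by_contra h3
        exact (h2 h3) hf
      · rintro rfl
        exact ⟨heT, by push_neg; exact ⟨hee', fun h => absurd rfl h⟩⟩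
    rw [hEq, Finset.card_singleton]
  · -- (ET2 \ ET').card < (ET \ ET').card
    have hEq : ET2 \ ET' = (ET \ ET').erase s(x, y) := by
      ext f
      simp only [Finset.mem_sdiff, hET2, Finset.mem_insert, Finset.mem_erase]
      constructor
      · rintro ⟨h1, h2⟩
        rcases h1 with rfl | ⟨h3, h4⟩
        · exact absurd he'T' h2
        · exact ⟨h3, h4, h2⟩
      · rintro ⟨h1, h2, h3⟩
        exact ⟨Or.inr ⟨h1, h2⟩, h3⟩
    rw [hEq]
    exact Finset.card_erase_lt_of_mem he

end Aux

/-- Given two maximum spanning trees `T`, `T'` of a connected weighted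
graph, there is a finite sequence of maximum spanning trees `T_0 = T, ..., T_k = T'`
with `dist(T_{i-1}, T_i) = 1` for all `1 ≤ i ≤ k`. -/
theorem maxSpanningTree_connected_by_exchanges {V : Type*} [DecidableEq V]
    (G : SimpleGraph V) (hG : G.Connected) (w : Sym2 V → ℝ)
    (ET ET' : Finset (Sym2 V))
    (hT : IsMaxSpanningTree G w ET) (hT' : IsMaxSpanningTree G w ET') :
    ∃ (k : ℕ) (f : ℕ → Finset (Sym2 V)), f 0 = ET ∧ f k = ET' ∧
      (∀ i ≤ k, IsMaxSpanningTree G w (f i)) ∧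
      (∀ i, 1 ≤ i → i ≤ k → ((f (i - 1)) \ (f i)).card = 1) := by
  classical
  suffices H : ∀ n (ET : Finset (Sym2 V)), IsMaxSpanningTree G w ET → (ET \ ET').card = n →
      ∃ (k : ℕ) (f : ℕ → Finset (Sym2 V)), f 0 = ET ∧ f k = ET' ∧
        (∀ i ≤ k, IsMaxSpanningTree G w (f i)) ∧
        (∀ i, 1 ≤ i → i ≤ k → ((f (i - 1)) \ (f i)).card = 1) by
    exact H _ ET hT rfl
  intro n
  induction n using Nat.strong_induction_on with
  | _ n ih =>
    intro ET hT hcard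
    rcases Finset.eq_empty_or_nonempty (ET \ ET') with hemp | hne
    · -- ET ⊆ ET', hence ET = ET'
      have hsub : ET ⊆ ET' := Finset.sdiff_eq_empty_iff_subset.1 hemp
      have hEq : ET = ET' := aux_st_eq hT.1 hT'.1 hsub
      subst hEq
      exact ⟨0, fun _ => ET, rfl, rfl, fun i hi => by simpa [Nat.le_zero.1 hi] using hT,
        fun i h1 h2 => by omega⟩
    · obtain ⟨ET2, hmax2, hdist, hlt⟩ := aux_exchange hT hT' hne
      obtain ⟨k, f, hf0, hfk, hmax, hdistf⟩ :=
        ih (ET2 \ ET').card (by omega) ET2 hmax2 rfl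
      refine ⟨k + 1, fun i => if i = 0 then ET else f (i - 1), by simp, by simp [hfk], ?_, ?_⟩
      · intro i hi
        by_cases h0 : i = 0
        · simpa [h0] using hT
        · simpa [h0] using hmax (i - 1) (by omega)
      · intro i h1 h2
        by_cases h0 : i = 1
        · subst h0
          simpa [hf0] using hdist
        · have hi1 : i - 1 ≠ 0 := by omega
          have hi0 : i ≠ 0 := by omega
          simpa [hi0, hi1] using hdistf (i - 1) (by omega) (by omega)
end
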